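/- Fix constants m₁ > 0, υ₊ > 0, c > 0, and h₀ > 0, and for κ > 0 and h > 0 define J̄_∞(κ, h) := h/m₁ + κ c √h e^{−h υ₊}. Then for all sufficiently large κ the infimum of J̄_∞(κ, ·) over [h₀, ∞) is attained, and any family of minimizers h*(κ) ∈ argmin_{h ≥ h₀} J̄_∞(κ, h) satisfies lim_{κ→∞} h*(κ) / ( (log κ)/υ₊ ) = 1 and lim_{κ→∞} J̄_∞(κ, h*(κ)) / ( (log κ)/(m₁ υ₊) ) = 1. -/

import Mathlib

open Filter

/-- Auxiliary: `c₀ * √(a*t) * exp (-(δ*t)) → 0` as `t → ∞`. -/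
lemma aux_sqrt_exp_zero (c₀ a δ : ℝ) (hδ : 0 < δ) :
    Tendsto (fun t : ℝ => c₀ * Real.sqrt (a * t) * Real.exp (-(δ * t))) atTop (nhds 0) := by
  have hmul : Tendsto (fun t : ℝ => δ * t) atTop atTop :=
    tendsto_id.const_mul_atTop hδ
  have h1 : Tendsto (fun t : ℝ => (δ * t) ^ 1 * Real.exp (-(δ * t))) atTop (nhds 0) :=
    (Real.tendsto_pow_mul_exp_neg_atTop_nhds_zero 1).comp hmul
  have h2 : Tendsto (fun t : ℝ => (|c₀| * Real.sqrt |a| / δ) * ((δ * t) * Real.exp (-(δ * t))))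
      atTop (nhds 0) := by
    have := h1.const_mul (|c₀| * Real.sqrt |a| / δ)
    simpa [pow_one] using this
  refine squeeze_zero_norm' ?_ (by simpa using h2)
  filter_upwards [eventually_ge_atTop (1 : ℝ)] with t ht
  have ht0 : (0 : ℝ) ≤ t := by linarith
  have hsq : Real.sqrt (a * t) ≤ Real.sqrt |a| * t := by
    have h1 : Real.sqrt (a * t) ≤ Real.sqrt (|a| * t) := by
      apply Real.sqrt_le_sqrt
      have : a ≤ |a| := le_abs_self a
      nlinarith
    have h2 : Real.sqrt (|a| * t) = Real.sqrt |a| * Real.sqrt t :=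
      Real.sqrt_mul (abs_nonneg a) t
    have h3 : Real.sqrt t ≤ t := by
      nlinarith [Real.sq_sqrt ht0, Real.sqrt_nonneg t, Real.sqrt_le_sqrt ht,
        Real.sqrt_one]
    calc Real.sqrt (a * t) ≤ Real.sqrt |a| * Real.sqrt t := by rw [← h2]; exact h1
      _ ≤ Real.sqrt |a| * t := by nlinarith [Real.sqrt_nonneg |a|]
  have hexp : (0 : ℝ) < Real.exp (-(δ * t)) := Real.exp_pos _
  have habs : |c₀ * Real.sqrt (a * t) * Real.exp (-(δ * t))|
      ≤ |c₀| * Real.sqrt (a * t) * Real.exp (-(δ * t)) := by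
    rw [abs_mul, abs_mul]
    gcongr
    · exact le_of_eq (abs_of_nonneg (Real.sqrt_nonneg _))
    · exact le_of_eq (abs_of_pos hexp)
  refine habs.trans ?_
  have : |c₀| * Real.sqrt (a * t) * Real.exp (-(δ * t))
      ≤ |c₀| * (Real.sqrt |a| * t) * Real.exp (-(δ * t)) := by
    gcongr
  refine this.trans (le_of_eq ?_)
  field_simp

/-- Auxiliary: `exp (δ*t) / t → ∞` as `t → ∞`. -/
lemma aux_exp_div_atTop (δ : ℝ) (hδ : 0 < δ) :
    Tendsto (fun t : ℝ => Real.exp (δ * t) / t) atTop atTop := by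
  have hmul : Tendsto (fun t : ℝ => δ * t) atTop atTop :=
    tendsto_id.const_mul_atTop hδ
  have h1 : Tendsto (fun t : ℝ => Real.exp (δ * t) / (δ * t) ^ 1) atTop atTop :=
    (Real.tendsto_exp_div_pow_atTop 1).comp hmul
  have h2 : Tendsto (fun t : ℝ => δ * (Real.exp (δ * t) / (δ * t) ^ 1)) atTop atTop :=
    h1.const_mul_atTop hδ
  refine h2.congr' ?_
  filter_upwards [eventually_gt_atTop (0 : ℝ)] with t ht
  have : δ * t ≠ 0 := by positivity
  field_simp

theorem stmt_16
    (m₁ υp c h₀ : ℝ) (hm : 0 < m₁) (hυ : 0 < υp) (hc : 0 < c) (hh₀ : 0 < h₀)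
    (J : ℝ → ℝ → ℝ)
    (hJ : ∀ κ h, J κ h = h / m₁ + κ * c * Real.sqrt h * Real.exp (-(h * υp))) :
    (∀ᶠ κ in atTop, ∃ h : ℝ, h₀ ≤ h ∧ IsMinOn (J κ) (Set.Ici h₀) h) ∧
    ∀ hstar : ℝ → ℝ,
      (∀ᶠ κ in atTop, h₀ ≤ hstar κ ∧ IsMinOn (J κ) (Set.Ici h₀) (hstar κ)) →
      Tendsto (fun κ => hstar κ / (Real.log κ / υp)) atTop (nhds 1) ∧
      Tendsto (fun κ => J κ (hstar κ) / (Real.log κ / (m₁ * υp))) atTop (nhds 1) := by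
  have hJnn : ∀ κ h : ℝ, 0 < κ → 0 ≤ κ * c * Real.sqrt h * Real.exp (-(h * υp)) := by
    intro κ h hκ
    positivity
  constructor
  · -- existence of minimizers for large κ
    filter_upwards [eventually_gt_atTop (0 : ℝ)] with κ hκ
    have hcont : ContinuousOn (J κ) (Set.Ici h₀) := by
      have : (J κ) = fun h => h / m₁ + κ * c * Real.sqrt h * Real.exp (-(h * υp)) :=
        funext (hJ κ)
      rw [this]
      fun_prop
    have hcoc : ∀ᶠ x in cocompact ℝ ⊓ 𝓟 (Set.Ici h₀), J κ h₀ ≤ J κ x := by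
      rw [eventually_inf_principal]
      rw [cocompact_eq_atBot_atTop, eventually_sup]
      constructor
      · filter_upwards [eventually_lt_atBot h₀] with x hx hx'
        exact absurd hx' (by simp [not_le.mpr hx])
      · filter_upwards [eventually_ge_atTop (J κ h₀ * m₁)] with x hx _
        have h1 : J κ h₀ ≤ x / m₁ := (le_div_iff₀ hm).mpr hx
        have h2 : x / m₁ ≤ J κ x := by
          rw [hJ]
          have := hJnn κ x hκ
          linarith
        linarith
    obtain ⟨x, hx, hmin⟩ := hcont.exists_isMinOn' isClosed_Ici
      (Set.mem_Ici.mpr le_rfl) hcoc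
    exact ⟨x, hx, hmin⟩
  · intro hstar hminev
    -- the key quantitative eventual statement
    have key : ∀ ε : ℝ, 0 < ε → ∀ᶠ κ in atTop,
        |hstar κ / (Real.log κ / υp) - 1| < ε ∧
        |J κ (hstar κ) / (Real.log κ / (m₁ * υp)) - 1| < ε := by
      intro ε hε
      set δ : ℝ := ε / 3 with hδdef
      have hδ : 0 < δ := by positivity
      -- eventual fact E1 : test point above h₀
      have T1 : Tendsto (fun κ : ℝ => (1 + δ) * Real.log κ / υp) atTop atTop :=
        ((Real.tendsto_log_atTop.const_mul_atTop (by linarith)).atTop_div_const hυ)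
      have E1 : ∀ᶠ κ : ℝ in atTop, h₀ ≤ (1 + δ) * Real.log κ / υp :=
        T1.eventually_ge_atTop h₀
      -- eventual fact E2
      have T2 : Tendsto (fun κ : ℝ =>
          c * Real.sqrt ((1 + δ) / υp * Real.log κ) * Real.exp (-(δ * Real.log κ)))
          atTop (nhds 0) :=
        (aux_sqrt_exp_zero c ((1 + δ) / υp) δ hδ).comp Real.tendsto_log_atTop
      have T3 : Tendsto (fun κ : ℝ => δ * Real.log κ / (m₁ * υp)) atTop atTop :=
        (Real.tendsto_log_atTop.const_mul_atTop hδ).atTop_div_const (by positivity)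
      have E2 : ∀ᶠ κ : ℝ in atTop,
          c * Real.sqrt ((1 + δ) * Real.log κ / υp) * Real.exp (-(δ * Real.log κ))
            ≤ δ * Real.log κ / (m₁ * υp) := by
        filter_upwards [T2.eventually_le_const (by norm_num : (0:ℝ) < 1),
          T3.eventually_ge_atTop 1] with κ h1 h2
        have heq : (1 + δ) * Real.log κ / υp = (1 + δ) / υp * Real.log κ := by ring
        rw [heq]
        linarith
      -- eventual fact E3
      have T4 : Tendsto (fun κ : ℝ => Real.exp (δ * Real.log κ) / Real.log κ)
          atTop atTop :=
        (aux_exp_div_atTop δ hδ).comp Real.tendsto_log_atTop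
      have E3 : ∀ᶠ κ : ℝ in atTop,
          (1 + 2 * δ) * Real.log κ / (m₁ * υp) < c * Real.sqrt h₀ * Real.exp (δ * Real.log κ) := by
        have hK : (0:ℝ) < (1 + 2 * δ) / (m₁ * υp * (c * Real.sqrt h₀)) + 1 := by
          have : 0 < Real.sqrt h₀ := Real.sqrt_pos.mpr hh₀
          positivity
        filter_upwards [T4.eventually_ge_atTop
            ((1 + 2 * δ) / (m₁ * υp * (c * Real.sqrt h₀)) + 1),
          Real.tendsto_log_atTop.eventually_gt_atTop 0] with κ h1 h2
        set L := Real.log κ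
        have hs : 0 < Real.sqrt h₀ := Real.sqrt_pos.mpr hh₀
        have hexp : Real.exp (δ * L) ≥ ((1 + 2 * δ) / (m₁ * υp * (c * Real.sqrt h₀)) + 1) * L := by
          rw [ge_iff_le, ← le_div_iff₀ h2]
          exact h1
        have h3 : c * Real.sqrt h₀ * Real.exp (δ * L)
            ≥ c * Real.sqrt h₀ * (((1 + 2 * δ) / (m₁ * υp * (c * Real.sqrt h₀)) + 1) * L) := by
          gcongr
        have h4 : c * Real.sqrt h₀ * (((1 + 2 * δ) / (m₁ * υp * (c * Real.sqrt h₀)) + 1) * L)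
            = (1 + 2 * δ) * L / (m₁ * υp) + c * Real.sqrt h₀ * L := by
          field_simp
        nlinarith [mul_pos (mul_pos hc hs) h2]
      -- combine
      filter_upwards [hminev, E1, E2, E3, eventually_gt_atTop (1 : ℝ)] with κ hminκ E1κ E2κ E3κ hκ1
      obtain ⟨hstar_ge, hmin⟩ := hminκ
      have hκ0 : (0:ℝ) < κ := by linarith
      set L := Real.log κ with hLdef
      have hL : 0 < L := Real.log_pos hκ1
      set ht : ℝ := (1 + δ) * L / υp with htdef
      set hs : ℝ := hstar κ with hsdef
      have hs0 : 0 < hs := lt_of_lt_of_le hh₀ hstar_ge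
      -- J κ ht computation
      have hsimp : κ * c * Real.sqrt ht * Real.exp (-(ht * υp))
          = c * Real.sqrt ht * Real.exp (-(δ * L)) := by
        have h1 : ht * υp = (1 + δ) * L := by
          rw [htdef]
          field_simp
        rw [h1]
        nth_rewrite 1 [← Real.exp_log hκ0]
        rw [← hLdef]
        rw [show Real.exp L * c * Real.sqrt ht * Real.exp (-((1 + δ) * L))
            = c * Real.sqrt ht * (Real.exp L * Real.exp (-((1 + δ) * L))) from by ring,
          ← Real.exp_add]
        ring_nf
      -- upper bound on optimal value
      have hub : J κ hs ≤ (1 + 2 * δ) * L / (m₁ * υp) := by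
        have h1 : J κ hs ≤ J κ ht := (isMinOn_iff.mp hmin) ht (Set.mem_Ici.mpr E1κ)
        have h2 : J κ ht = ht / m₁ + c * Real.sqrt ht * Real.exp (-(δ * L)) := by
          rw [hJ, hsimp]
        have h3 : ht / m₁ = (1 + δ) * L / (m₁ * υp) := by
          rw [htdef]; field_simp
        have h4 : c * Real.sqrt ht * Real.exp (-(δ * L)) ≤ δ * L / (m₁ * υp) := E2κ
        have h5 : (1 + δ) * L / (m₁ * υp) + δ * L / (m₁ * υp) = (1 + 2 * δ) * L / (m₁ * υp) := by
          ring
        linarith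
      -- lower bound: J κ hs ≥ hs / m₁
      have hlb0 : hs / m₁ ≤ J κ hs := by
        rw [hJ]
        have := hJnn κ hs hκ0
        linarith
      -- upper bound on hs
      have hs_ub : hs ≤ (1 + 2 * δ) * L / υp := by
        have h1 : hs / m₁ ≤ (1 + 2 * δ) * L / (m₁ * υp) := le_trans hlb0 hub
        rw [div_le_iff₀ hm] at h1
        have h2 : (1 + 2 * δ) * L / (m₁ * υp) * m₁ = (1 + 2 * δ) * L / υp := by
          field_simp
        linarith [h2 ▸ h1]
      -- lower bound on hs
      have hs_lb : (1 - δ) * L < hs * υp := by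
        by_contra hcon
        push_neg at hcon
        have hle : Real.exp (L + -(hs * υp)) ≥ Real.exp (δ * L) := by
          apply Real.exp_le_exp.mpr
          linarith
        have h1 : c * Real.sqrt h₀ * Real.exp (δ * L) ≤ J κ hs := by
          have h2 : κ * c * Real.sqrt hs * Real.exp (-(hs * υp))
              ≥ κ * c * Real.sqrt h₀ * Real.exp (-(hs * υp)) := by
            gcongr
          have h3 : κ * c * Real.sqrt h₀ * Real.exp (-(hs * υp))
              = c * Real.sqrt h₀ * Real.exp (L + -(hs * υp)) := by
            nth_rewrite 1 [← Real.exp_log hκ0]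
            rw [← hLdef, Real.exp_add]
            ring
          have h4 : c * Real.sqrt h₀ * Real.exp (L + -(hs * υp))
              ≥ c * Real.sqrt h₀ * Real.exp (δ * L) := by
            gcongr
          have h5 : 0 ≤ hs / m₁ := by positivity
          rw [hJ]
          linarith [h3 ▸ h2]
        linarith
      -- conclude the two bounds
      have hD1 : 0 < L / υp := by positivity
      have hr1lo : 1 - δ < hs / (L / υp) := by
        rw [lt_div_iff₀ hD1]
        have heq : (1 - δ) * (L / υp) = (1 - δ) * L / υp := by ring
        rw [heq, div_lt_iff₀ hυ]
        linarith
      have hr1hi : hs / (L / υp) ≤ 1 + 2 * δ := by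
        rw [div_le_iff₀ hD1]
        have heq : (1 + 2 * δ) * (L / υp) = (1 + 2 * δ) * L / υp := by ring
        rw [heq]
        exact hs_ub
      have hD2 : 0 < L / (m₁ * υp) := by positivity
      have hr2lo : 1 - δ < J κ hs / (L / (m₁ * υp)) := by
        rw [lt_div_iff₀ hD2]
        have h1 : (1 - δ) * (L / (m₁ * υp)) = (1 - δ) * L / (m₁ * υp) := by ring
        have h2 : (1 - δ) * L / (m₁ * υp) < hs * υp / (m₁ * υp) := by
          gcongr
        have h3 : hs * υp / (m₁ * υp) = hs / m₁ := by
          field_simp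
        rw [h1]
        rw [h3] at h2
        linarith
      have hr2hi : J κ hs / (L / (m₁ * υp)) ≤ 1 + 2 * δ := by
        rw [div_le_iff₀ hD2]
        have heq : (1 + 2 * δ) * (L / (m₁ * υp)) = (1 + 2 * δ) * L / (m₁ * υp) := by ring
        rw [heq]
        exact hub
      constructor
      · rw [abs_lt]
        constructor <;> [linarith; linarith]
      · rw [abs_lt]
        constructor <;> [linarith; linarith]
    constructor
    · rw [Metric.tendsto_nhds]
      intro ε hε
      filter_upwards [key ε hε] with κ hκ
      rw [Real.dist_eq]
      exact hκ.1
    · rw [Metric.tendsto_nhds]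
      intro ε hε
      filter_upwards [key ε hε] with κ hκ
      rw [Real.dist_eq]
      exact hκ.2
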